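/- Fix a real number R > 0 and real numbers K and J. For L in (0, 2R) with L != R define tau2(L) := 3*(7R^2 - 8RL + 2L^2)/(256*R^2*(R - L)*sqrt(L*(2R - L))) - sqrt(L)*(27R^2 - 40RL + 10L^2)*K/(384*R*(R - L)*(2R - L)^(3/2)) + L^(3/2)*(31R^2 - 36RL + 6L^2)*K^2/(768*(R - L)*(2R - L)^(5/2)) - L^(3/2)*R*J/(192*(2R - L)^(3/2)). Then (R - L)*tau2(L) tends to (3 + R*K)^2/(768*R) as L tends to R (with L != R). In particular, tau2 has a simple pole at L = R exactly when 3 + R*K != 0. -/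

import Mathlib

open Filter Topology

/-- the second twist coefficient of a symmetric billiard has
`(R - L) * τ₂(L) → (3 + R K)² / (768 R)` as `L → R`, `L ≠ R`; in particular `τ₂` has a
simple pole at `L = R` exactly when `3 + R K ≠ 0`. -/
theorem tau2_simple_pole_at_L_eq_R (R K J : ℝ) (hR : 0 < R)
    (tau2 : ℝ → ℝ)
    (htau2 : ∀ L : ℝ, tau2 L =
      3 * (7 * R ^ 2 - 8 * R * L + 2 * L ^ 2)
        / (256 * R ^ 2 * (R - L) * Real.sqrt (L * (2 * R - L)))
      - Real.sqrt L * (27 * R ^ 2 - 40 * R * L + 10 * L ^ 2) * K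
        / (384 * R * (R - L) * (2 * R - L) ^ ((3 : ℝ) / 2))
      + L ^ ((3 : ℝ) / 2) * (31 * R ^ 2 - 36 * R * L + 6 * L ^ 2) * K ^ 2
        / (768 * (R - L) * (2 * R - L) ^ ((5 : ℝ) / 2))
      - L ^ ((3 : ℝ) / 2) * R * J / (192 * (2 * R - L) ^ ((3 : ℝ) / 2))) :
    Tendsto (fun L : ℝ => (R - L) * tau2 L) (𝓝[≠] R)
      (𝓝 ((3 + R * K) ^ 2 / (768 * R))) := by
  have hR0 : R ≠ 0 := ne_of_gt hR
  set f : ℝ → ℝ := fun L =>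
    3 * (7 * R ^ 2 - 8 * R * L + 2 * L ^ 2)
        / (256 * R ^ 2 * Real.sqrt (L * (2 * R - L)))
      - Real.sqrt L * (27 * R ^ 2 - 40 * R * L + 10 * L ^ 2) * K
        / (384 * R * (2 * R - L) ^ ((3 : ℝ) / 2))
      + L ^ ((3 : ℝ) / 2) * (31 * R ^ 2 - 36 * R * L + 6 * L ^ 2) * K ^ 2
        / (768 * (2 * R - L) ^ ((5 : ℝ) / 2))
      - (R - L) * (L ^ ((3 : ℝ) / 2) * R * J) / (192 * (2 * R - L) ^ ((3 : ℝ) / 2)) with hf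
  have hc : ContinuousAt f R := by
    have hsq : ContinuousAt (fun L : ℝ => Real.sqrt (L * (2 * R - L))) R :=
      (Real.continuous_sqrt.comp (by fun_prop)).continuousAt
    have h32 : ContinuousAt (fun L : ℝ => (2 * R - L) ^ ((3 : ℝ) / 2)) R :=
      ContinuousAt.rpow_const (by fun_prop) (Or.inr (by norm_num))
    have h52 : ContinuousAt (fun L : ℝ => (2 * R - L) ^ ((5 : ℝ) / 2)) R :=
      ContinuousAt.rpow_const (by fun_prop) (Or.inr (by norm_num))
    have hL32 : ContinuousAt (fun L : ℝ => L ^ ((3 : ℝ) / 2)) R :=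
      ContinuousAt.rpow_const (continuousAt_id) (Or.inr (by norm_num))
    have hRR : (0:ℝ) < R * (2 * R - R) := by nlinarith
    have hd1 : 256 * R ^ 2 * Real.sqrt (R * (2 * R - R)) ≠ 0 := by
      have := Real.sqrt_pos.mpr hRR
      positivity
    have hd2 : 384 * R * (2 * R - R) ^ ((3 : ℝ) / 2) ≠ 0 := by
      have : (0:ℝ) < (2 * R - R) ^ ((3 : ℝ) / 2) :=
        Real.rpow_pos_of_pos (by linarith) _
      positivity
    have hd3 : 768 * (2 * R - R) ^ ((5 : ℝ) / 2) ≠ 0 := by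
      have : (0:ℝ) < (2 * R - R) ^ ((5 : ℝ) / 2) :=
        Real.rpow_pos_of_pos (by linarith) _
      positivity
    have hd4 : 192 * (2 * R - R) ^ ((3 : ℝ) / 2) ≠ 0 := by
      have : (0:ℝ) < (2 * R - R) ^ ((3 : ℝ) / 2) :=
        Real.rpow_pos_of_pos (by linarith) _
      positivity
    apply ContinuousAt.sub
    apply ContinuousAt.add
    apply ContinuousAt.sub
    · exact ContinuousAt.div (by fun_prop) (by fun_prop) hd1
    · exact ContinuousAt.div (by fun_prop) (continuousAt_const.mul h32) hd2
    · exact ContinuousAt.div ((hL32.mul (by fun_prop)).mul continuousAt_const)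
        (continuousAt_const.mul h52) hd3
    · exact ContinuousAt.div (ContinuousAt.mul (by fun_prop) ((hL32.mul continuousAt_const).mul continuousAt_const)) (continuousAt_const.mul h32) hd4
  have hs : Real.sqrt R > 0 := Real.sqrt_pos.mpr hR
  have hs2 : Real.sqrt R * Real.sqrt R = R := Real.mul_self_sqrt hR.le
  have hval : f R = (3 + R * K) ^ 2 / (768 * R) := by
    have e1 : 2 * R - R = R := by ring
    have e2 : Real.sqrt (R * (2 * R - R)) = R := by
      rw [e1, Real.sqrt_mul_self hR.le]
    have h32 : R ^ ((3 : ℝ) / 2) = R * Real.sqrt R := by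
      rw [show (3:ℝ)/2 = 1 + 1/2 by norm_num, Real.rpow_add hR, Real.rpow_one,
        ← Real.sqrt_eq_rpow]
    have h52 : R ^ ((5 : ℝ) / 2) = R ^ 2 * Real.sqrt R := by
      rw [show (5:ℝ)/2 = 2 + 1/2 by norm_num, Real.rpow_add hR,
        ← Real.sqrt_eq_rpow, show (2:ℝ) = ((2:ℕ):ℝ) by norm_num, Real.rpow_natCast]
    simp only [hf, e1, e2, h32, h52, sub_self]
    field_simp
    rw [Real.sqrt_sq hR.le]
    nlinarith [hs2, sq_nonneg (Real.sqrt R), hR, hs]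
  have heq : (fun L : ℝ => (R - L) * tau2 L) =ᶠ[𝓝[≠] R] f := by
    filter_upwards [mem_nhdsWithin_of_mem_nhds (Ioo_mem_nhds hR (by linarith : R < 2*R)),
      self_mem_nhdsWithin] with L hL hLne
    have hL0 : 0 < L := hL.1
    have hL2 : 0 < 2 * R - L := by have := hL.2; linarith
    have hRL : R - L ≠ 0 := sub_ne_zero.mpr (Ne.symm hLne)
    have hsq : Real.sqrt (L * (2 * R - L)) ≠ 0 :=
      ne_of_gt (Real.sqrt_pos.mpr (by positivity))
    have ht : (2 * R - L) ^ ((3 : ℝ) / 2) ≠ 0 := ne_of_gt (Real.rpow_pos_of_pos hL2 _)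
    have hu : (2 * R - L) ^ ((5 : ℝ) / 2) ≠ 0 := ne_of_gt (Real.rpow_pos_of_pos hL2 _)
    rw [htau2, hf]
    field_simp
  refine Tendsto.congr' heq.symm ?_
  rw [← hval]
  exact hc.tendsto.mono_left nhdsWithin_le_nhds
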